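/- Let H be a Hilbert space, C : dom(C) ⊆ H → H quasi-m-accretive, and α ∈ L(H) with α[dom(C)] ⊆ dom(C) such that the commutator [α,C] := αC − Cα (on dom(C)) is continuous. Then for all sufficiently small η ≥ 0, the commutator of the resolvent satisfies [(1+ηC)⁻¹, α] = η (1+ηC)⁻¹ cl([α,C]) (1+ηC)⁻¹. In particular, [(1+ηC)⁻¹, α] → 0 in operator norm as η → 0+. -/

import Mathlib

open Filter Topology

noncomputable section

/-- `Rη` is the resolvent `(1 + η C)⁻¹` of the (generally unbounded) operator `C`. -/
def IsResolvent {H : Type*} [NormedAddCommGroup H] [InnerProductSpace ℝ H]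
    (C : H →ₗ.[ℝ] H) (η : ℝ) (Rη : H →L[ℝ] H) : Prop :=
  (∀ x : C.domain, Rη ((x : H) + η • C x) = x) ∧
  (∀ y : H, ∃ h : Rη y ∈ C.domain, Rη y + η • C ⟨Rη y, h⟩ = y)

/-- `C` is quasi-m-accretive, witnessed by the resolvent family `Res` on `[0, η₀]`. -/
def IsQuasiMAccretiveWith {H : Type*} [NormedAddCommGroup H] [InnerProductSpace ℝ H]
    (C : H →ₗ.[ℝ] H) (Res : ℝ → H →L[ℝ] H) (η₀ M : ℝ) : Prop :=
  0 < η₀ ∧ ∀ η ∈ Set.Icc (0 : ℝ) η₀, IsResolvent C η (Res η) ∧ ‖Res η‖ ≤ M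

/-- for a quasi-m-accretive `C` and bounded `α` leaving `dom C` invariant with
continuous commutator `[α,C]` (continuous extension `T`), one has
`[(1+ηC)⁻¹, α] = η (1+ηC)⁻¹ cl([α,C]) (1+ηC)⁻¹` for small `η ≥ 0`, and
`[(1+ηC)⁻¹, α] → 0` in operator norm as `η → 0+`. -/
theorem resolvent_commutator_formula
    {H : Type*} [NormedAddCommGroup H] [InnerProductSpace ℝ H] [CompleteSpace H]
    (C : H →ₗ.[ℝ] H) (hdense : Dense (C.domain : Set H)) (hclosed : C.IsClosed)
    (Res : ℝ → H →L[ℝ] H) (η₀ M : ℝ)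
    (hq : IsQuasiMAccretiveWith C Res η₀ M)
    (α : H →L[ℝ] H) (hα : ∀ x ∈ C.domain, α x ∈ C.domain)
    (T : H →L[ℝ] H)
    (hT : ∀ x : C.domain, T (x : H) = α (C x) - C ⟨α x, hα x x.2⟩) :
    (∀ η ∈ Set.Icc (0 : ℝ) η₀,
        (Res η).comp α - α.comp (Res η) = η • ((Res η).comp (T.comp (Res η)))) ∧
      Tendsto (fun η : ℝ => ‖(Res η).comp α - α.comp (Res η)‖) (𝓝[>] (0 : ℝ)) (𝓝 0) := by
  have main : ∀ η ∈ Set.Icc (0 : ℝ) η₀,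
      (Res η).comp α - α.comp (Res η) = η • ((Res η).comp (T.comp (Res η))) := by
    intro η hη
    obtain ⟨⟨h1, h2⟩, hM⟩ := hq.2 η hη
    ext y
    obtain ⟨hx, hxe⟩ := h2 y
    have hax : α (Res η y) ∈ C.domain := hα _ hx
    have hTx : T (Res η y) = α (C ⟨Res η y, hx⟩) - C ⟨α (Res η y), hax⟩ := hT ⟨Res η y, hx⟩
    have key : α y = (α (Res η y) + η • (C ⟨α (Res η y), hax⟩ : H)) + η • T (Res η y) := by
      have h0 : α y = α (Res η y) + η • α (C ⟨Res η y, hx⟩) := by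
        conv_lhs => rw [← hxe]
        simp [map_add, map_smul]
      rw [h0, hTx, smul_sub]
      abel
    simp only [ContinuousLinearMap.sub_apply, ContinuousLinearMap.comp_apply,
      ContinuousLinearMap.smul_apply]
    rw [key, map_add, map_smul]
    have hres : Res η (α (Res η y) + η • (C ⟨α (Res η y), hax⟩ : H)) = α (Res η y) :=
      h1 ⟨α (Res η y), hax⟩
    rw [hres]
    abel
  refine ⟨main, ?_⟩
  have hbound : ∀ η ∈ Set.Ioc (0 : ℝ) η₀,
      ‖(Res η).comp α - α.comp (Res η)‖ ≤ η * (M * (‖T‖ * M)) := by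
    intro η hη
    have hη' : η ∈ Set.Icc (0 : ℝ) η₀ := ⟨le_of_lt hη.1, hη.2⟩
    obtain ⟨-, hM⟩ := hq.2 η hη'
    have hM0 : (0:ℝ) ≤ M := (norm_nonneg _).trans hM
    have hns : ‖η • (Res η).comp (T.comp (Res η))‖ = |η| * ‖(Res η).comp (T.comp (Res η))‖ := by
      rw [norm_smul (α := ℝ) (β := H →L[ℝ] H), Real.norm_eq_abs]
    rw [main η hη', hns, abs_of_pos hη.1]
    have h2 : ‖T.comp (Res η)‖ ≤ ‖T‖ * M := le_trans (ContinuousLinearMap.opNorm_comp_le _ _)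
      (mul_le_mul_of_nonneg_left hM (norm_nonneg _))
    have h3 : ‖(Res η).comp (T.comp (Res η))‖ ≤ M * (‖T‖ * M) :=
      le_trans (ContinuousLinearMap.opNorm_comp_le _ _)
        (mul_le_mul hM h2 (norm_nonneg _) hM0)
    exact mul_le_mul_of_nonneg_left h3 (le_of_lt hη.1)
  have hmem : Set.Ioc (0 : ℝ) η₀ ∈ 𝓝[>] (0 : ℝ) :=
    Ioc_mem_nhdsGT_of_mem ⟨le_refl _, hq.1⟩
  have hg : Tendsto (fun η : ℝ => η * (M * (‖T‖ * M))) (𝓝[>] (0 : ℝ)) (𝓝 0) := by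
    have : Tendsto (fun η : ℝ => η * (M * (‖T‖ * M))) (𝓝 (0 : ℝ)) (𝓝 0) := by
      have := (continuous_id.mul (continuous_const (y := M * (‖T‖ * M)))).tendsto 0
      simpa [Pi.mul_def] using this
    exact this.mono_left nhdsWithin_le_nhds
  refine squeeze_zero' ?_ ?_ hg
  · filter_upwards with η using norm_nonneg _
  · filter_upwards [hmem] with η hη using hbound η hη
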